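/- The coefficients of the formal power series (-2q;q)_∞ (q;q^2)_∞ are congruent modulo 3 to the coefficients of ∑_{n∈ℤ} (-1)^n q^{n^2}; in particular, the coefficient of q^n is ≡ 0 (mod 3) unless n is a square, ≡ 1 (mod 3) if n is an odd square (n ≥ 1), and ≡ 2 (mod 3) if n is an even square. -/

import Mathlib

open Polynomial Finset

/-- Gaussian binomial `[n choose k]` in base `q²` (variable `X²`), as an integer polynomial. -/
noncomputable def g2 : ℕ → ℕ → Polynomial ℤ
  | 0, 0 => 1
  | 0, _+1 => 0
  | _+1, 0 => 1
  | n+1, k+1 => g2 n k + X^(2*(k+1)) * g2 n (k+1)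

@[simp] lemma g2_zero_right (n : ℕ) : g2 n 0 = 1 := by cases n <;> rfl

lemma g2_eq_zero : ∀ n k : ℕ, n < k → g2 n k = 0 := by
  intro n
  induction n with
  | zero => intro k hk; match k, hk with | k+1, _ => rfl
  | succ n ih =>
    intro k hk
    match k, hk with
    | k+1, hk =>
      show g2 n k + X^(2*(k+1)) * g2 n (k+1) = 0
      rw [ih k (by omega), ih (k+1) (by omega)]
      ring

@[simp] lemma g2_diag (n : ℕ) : g2 n n = 1 := by
  induction n with
  | zero => rfl
  | succ n ih =>
    show g2 n n + X^(2*(n+1)) * g2 n (n+1) = 1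
    rw [ih, g2_eq_zero n (n+1) (by omega)]; ring

lemma g2_pascal1 (n k : ℕ) : g2 (n+1) (k+1) = g2 n k + X^(2*(k+1)) * g2 n (k+1) := rfl

lemma g2_pascal2 : ∀ n k : ℕ, k ≤ n → g2 (n+1) (k+1) = X^(2*(n-k)) * g2 n k + g2 n (k+1) := by
  intro n
  induction n with
  | zero =>
    intro k hk
    interval_cases k
    simp [g2_pascal1, g2_eq_zero 0 1 (by omega)]
  | succ n ih =>
    intro k hk
    match k with
    | 0 =>
      have h := ih 0 (by omega)
      rw [g2_pascal1] at h
      rw [g2_pascal1]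
      simp only [g2_zero_right, Nat.sub_zero, mul_one, one_mul] at h ⊢
      rw [ih 0 (by omega)]
      simp only [g2_zero_right, Nat.sub_zero, mul_one, one_mul]
      linear_combination h
    | m+1 =>
      have hm : m ≤ n := by omega
      by_cases hmn : m + 1 ≤ n
      · obtain ⟨d, rfl⟩ : ∃ d, n = m+1+d := ⟨n-(m+1), by omega⟩
        have hP := ih m hm
        have hP2 := g2_pascal1 (m+1+d) m
        have hQ1 := ih (m+1) hmn
        have hQ2 := g2_pascal1 (m+1+d) (m+1)
        rw [g2_pascal1]
        simp only [show m+1+d-m = d+1 from by omega, show m+1+d-(m+1) = d from by omega,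
          show m+1+d+1-(m+1) = d+1 from by omega] at hP hQ1 ⊢
        linear_combination hP - X^(2*(d+1))*hP2 + X^(2*(m+1+1))*hQ1 - hQ2
      · have hmn2 : m = n := by omega
        subst hmn2
        simp [g2_diag, g2_eq_zero (m+1) (m+2) (by omega)]
lemma prodA : ∀ M j : ℕ, j ≤ M →
    g2 M j * ∏ k ∈ range j, (1 - X^(2*(k+1))) =
      ∏ k ∈ range j, (1 - (X:Polynomial ℤ)^(2*(M-k))) := by
  intro M
  induction M with
  | zero => intro j hj; interval_cases j; simp
  | succ M ih =>
    intro j hj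
    match j with
    | 0 => simp
    | m+1 =>
      by_cases hm : m + 1 ≤ M
      · obtain ⟨d, rfl⟩ : ∃ d, M = m+1+d := ⟨M-(m+1), by omega⟩
        have h1 := ih m (by omega)
        have h2 := ih (m+1) hm
        rw [prod_range_succ, prod_range_succ] at h2
        rw [g2_pascal1, prod_range_succ, prod_range_succ']
        simp only [show ∀ i : ℕ, m+1+d+1-(i+1) = m+1+d-i from fun i => by omega,
          show m+1+d-m = d+1 from by omega, Nat.sub_zero] at h2 ⊢
        linear_combination (1 - (X:Polynomial ℤ)^(2*(m+1)))*h1 + (X:Polynomial ℤ)^(2*(m+1))*h2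
      · have : m = M := by omega
        subst this
        rw [g2_diag, one_mul, ← Finset.prod_range_reflect]
        apply Finset.prod_congr rfl
        intro k hk
        simp only [mem_range] at hk
        congr 2
        omega

lemma prodA' : ∀ M j c : ℕ, j + c = M →
    g2 M j * ∏ k ∈ range c, (1 - X^(2*(k+1))) =
      ∏ k ∈ range c, (1 - (X:Polynomial ℤ)^(2*(M-k))) := by
  intro M
  induction M with
  | zero =>
    intro j c h
    obtain ⟨rfl, rfl⟩ : j = 0 ∧ c = 0 := by omega
    simp
  | succ M ih =>
    intro j c h
    match j with
    | 0 =>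
      obtain rfl : c = M + 1 := by omega
      rw [g2_zero_right, one_mul, ← Finset.prod_range_reflect]
      refine Finset.prod_congr rfl fun k hk => ?_
      simp only [mem_range] at hk
      congr 2
      omega
    | m+1 =>
      match c with
      | 0 =>
        have hM : M = m := by omega
        subst hM
        simp
      | e+1 =>
        obtain rfl : M = m+1+e := by omega
        have h1 := ih m (e+1) (by omega)
        have h2 := ih (m+1) e (by omega)
        rw [prod_range_succ, prod_range_succ] at h1
        rw [g2_pascal1, prod_range_succ, prod_range_succ']
        simp only [show ∀ i : ℕ, m+1+e+1-(i+1) = m+1+e-i from fun i => by omega,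
          show m+1+e-e = m+1 from by omega, Nat.sub_zero] at h1 ⊢
        linear_combination h1 + (X:Polynomial ℤ)^(2*(m+1))*(1 - (X:Polynomial ℤ)^(2*(e+1)))*h2
/-- `|j - b|²` via truncated subtraction. -/
def eexp (j b : ℕ) : ℕ := (j - b)^2 + (b - j)^2

lemma eexp_succ_succ (i b : ℕ) : eexp (i+1) (b+1) = eexp i b := by
  simp [eexp, Nat.succ_sub_succ]

lemma eexp_self (b : ℕ) : eexp b b = 0 := by simp [eexp]

lemma mainQ (b : ℕ) :
    (∏ k ∈ range b, ((X:Polynomial ℤ)^(2*k+1) - 1)) =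
      ∑ j ∈ range (b+1), (-1)^j * g2 b j * X^(eexp j b) := by
  induction b with
  | zero => simp [eexp]
  | succ b ih =>
    have e2 : ∀ j, j ≤ b → 2*j + eexp j (b+1) = eexp j b + (2*b+1) := by
      intro j hj
      obtain ⟨t, rfl⟩ : ∃ t, b = j + t := ⟨b - j, by omega⟩
      simp only [eexp, show j - (j+t) = 0 from by omega, show j+t-j = t from by omega,
        show j - (j+t+1) = 0 from by omega, show j+t+1-j = t+1 from by omega]
      ring
    have key : ∑ j ∈ range (b+1+1), ((-1:Polynomial ℤ)^j * g2 (b+1) j * X^(eexp j (b+1)))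
        = (∑ j ∈ range (b+1), (-1:Polynomial ℤ)^j * g2 b j * X^(eexp j b)) * (X^(2*b+1) - 1) := by
      rw [Finset.sum_range_succ']
      have h1 : ∀ i ∈ range (b+1), (-1:Polynomial ℤ)^(i+1) * g2 (b+1) (i+1) * X^(eexp (i+1) (b+1))
          = (-((-1)^i * g2 b i * X^(eexp i b)))
            + (-1)^(i+1) * g2 b (i+1) * (X^(2*(i+1)) * X^(eexp (i+1) (b+1))) := by
        intro i _
        rw [g2_pascal1, eexp_succ_succ]
        ring
      rw [Finset.sum_congr rfl h1, Finset.sum_add_distrib, add_assoc]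
      have h2 : (∑ i ∈ range (b+1), (-1:Polynomial ℤ)^(i+1) * g2 b (i+1) * (X^(2*(i+1)) * X^(eexp (i+1) (b+1))))
           + (-1:Polynomial ℤ)^0 * g2 (b+1) 0 * X^(eexp 0 (b+1))
          = ∑ j ∈ range (b+1+1), (-1:Polynomial ℤ)^j * g2 b j * (X^(2*j) * X^(eexp j (b+1))) := by
        conv_rhs => rw [Finset.sum_range_succ']
        simp
      rw [h2]
      have h3 : ∑ j ∈ range (b+1+1), (-1:Polynomial ℤ)^j * g2 b j * (X^(2*j) * X^(eexp j (b+1)))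
          = ∑ j ∈ range (b+1), (-1:Polynomial ℤ)^j * g2 b j * X^(eexp j b) * X^(2*b+1) := by
        rw [Finset.sum_range_succ, g2_eq_zero b (b+1) (by omega)]
        simp only [mul_zero, zero_mul, add_zero]
        refine Finset.sum_congr rfl fun j hj => ?_
        simp only [mem_range] at hj
        rw [← pow_add, e2 j (by omega), pow_add]
        ring
      rw [h3, Finset.sum_neg_distrib, ← Finset.sum_mul]
      ring
    rw [prod_range_succ, ih, key]

lemma mainR (a b : ℕ) :
    (∏ k ∈ range a, (1 - (X:Polynomial ℤ)^(2*k+1))) *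
      ∏ k ∈ range b, ((X:Polynomial ℤ)^(2*k+1) - 1) =
      ∑ j ∈ range (a+b+1), (-1)^j * g2 (a+b) j * X^(eexp j b) := by
  induction a with
  | zero => simpa using mainQ b
  | succ a ih =>
    have e2 : ∀ i, i ≤ a + b → 2*(a+b-i) + eexp (i+1) b = eexp i b + (2*a+1) := by
      intro i hi
      rcases le_or_gt b i with h | h
      · obtain ⟨s, rfl⟩ : ∃ s, i = b + s := ⟨i - b, by omega⟩
        simp only [eexp, show b+s+1-b = s+1 from by omega, show b-(b+s+1) = 0 from by omega,
          show b+s-b = s from by omega, show b-(b+s) = 0 from by omega,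
          show a+b-(b+s) = a-s from by omega]
        obtain ⟨u, rfl⟩ : ∃ u, a = s + u := ⟨a - s, by omega⟩
        simp only [show s+u-s = u from by omega]
        ring
      · obtain ⟨s, rfl⟩ : ∃ s, b = i + (s+1) := ⟨b - i - 1, by omega⟩
        simp only [eexp, show i+1-(i+(s+1)) = 0 from by omega, show i+(s+1)-(i+1) = s from by omega,
          show i-(i+(s+1)) = 0 from by omega, show i+(s+1)-i = s+1 from by omega,
          show a+(i+(s+1))-i = a+s+1 from by omega]
        ring
    have key : ∑ j ∈ range (a+1+b+1), ((-1:Polynomial ℤ)^j * g2 (a+1+b) j * X^(eexp j b))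
        = (1 - X^(2*a+1)) * ∑ j ∈ range (a+b+1), (-1:Polynomial ℤ)^j * g2 (a+b) j * X^(eexp j b) := by
      have hr : a+1+b+1 = (a+b+1)+1 := by omega
      rw [hr, Finset.sum_range_succ']
      have h1 : ∀ i ∈ range (a+b+1), (-1:Polynomial ℤ)^(i+1) * g2 (a+1+b) (i+1) * X^(eexp (i+1) b)
          = (-((-1)^i * g2 (a+b) i * (X^(2*(a+b-i)) * X^(eexp (i+1) b))))
            + (-1)^(i+1) * g2 (a+b) (i+1) * X^(eexp (i+1) b) := by
        intro i hi
        simp only [mem_range] at hi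
        have hab : a+1+b = (a+b)+1 := by omega
        rw [hab, g2_pascal2 (a+b) i (by omega)]
        ring
      rw [Finset.sum_congr rfl h1, Finset.sum_add_distrib, add_assoc]
      have h2 : (∑ i ∈ range (a+b+1), (-1:Polynomial ℤ)^(i+1) * g2 (a+b) (i+1) * X^(eexp (i+1) b))
           + (-1:Polynomial ℤ)^0 * g2 (a+1+b) 0 * X^(eexp 0 b)
          = ∑ j ∈ range (a+b+1+1), (-1:Polynomial ℤ)^j * g2 (a+b) j * X^(eexp j b) := by
        conv_rhs => rw [Finset.sum_range_succ']
        simp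
      rw [h2]
      have h4 : ∑ j ∈ range (a+b+1+1), (-1:Polynomial ℤ)^j * g2 (a+b) j * X^(eexp j b)
          = ∑ j ∈ range (a+b+1), (-1:Polynomial ℤ)^j * g2 (a+b) j * X^(eexp j b) := by
        rw [Finset.sum_range_succ, g2_eq_zero (a+b) (a+b+1) (by omega)]
        simp
      rw [h4]
      have h3 : ∑ i ∈ range (a+b+1), -((-1:Polynomial ℤ)^i * g2 (a+b) i * (X^(2*(a+b-i)) * X^(eexp (i+1) b)))
          = -(X^(2*a+1) * ∑ j ∈ range (a+b+1), (-1:Polynomial ℤ)^j * g2 (a+b) j * X^(eexp j b)) := by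
        rw [Finset.mul_sum, Finset.sum_neg_distrib]
        rw [neg_inj]
        refine Finset.sum_congr rfl fun i hi => ?_
        simp only [mem_range] at hi
        rw [mul_assoc, ← pow_add, e2 i (by omega), pow_add]
        ring
      rw [h3]
      ring
    rw [prod_range_succ, key, ← ih]
    ring
lemma near_one_mul {d : ℕ} {u v : Polynomial ℤ} (hu : (X:Polynomial ℤ)^(d+1) ∣ u - 1)
    (hv : (X:Polynomial ℤ)^(d+1) ∣ v - 1) : (X:Polynomial ℤ)^(d+1) ∣ u*v - 1 := by
  have h : u*v - 1 = u*(v-1) + (u-1) := by ring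
  rw [h]
  exact dvd_add (Dvd.dvd.mul_left hv u) hu

lemma near_one_prod {d : ℕ} (s : Finset ℕ) (f : ℕ → ℕ) (h : ∀ i ∈ s, d < f i) :
    (X:Polynomial ℤ)^(d+1) ∣ (∏ i ∈ s, (1 - (X:Polynomial ℤ)^(f i))) - 1 := by
  induction s using Finset.cons_induction with
  | empty => simp
  | cons a s ha ih =>
    rw [Finset.prod_cons]
    apply near_one_mul
    · have : (1 - (X:Polynomial ℤ)^(f a)) - 1 = -(X^(f a)) := by ring
      rw [this]
      exact Dvd.dvd.neg_right (pow_dvd_pow X (h a (Finset.mem_cons_self a s)))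
    · exact ih fun i hi => h i (Finset.mem_cons_of_mem hi)

lemma near_one_coeff {d : ℕ} {u : Polynomial ℤ} (h : (X:Polynomial ℤ)^(d+1) ∣ u - 1)
    {t : ℕ} (ht : t ≤ d) : u.coeff t = if t = 0 then 1 else 0 := by
  have hu : u = (u - 1) + 1 := by ring
  rw [hu, Polynomial.coeff_add, Polynomial.X_pow_dvd_iff.mp h t (by omega), zero_add,
    Polynomial.coeff_one]

lemma coeff_mul_near_one {d : ℕ} {p u : Polynomial ℤ} (h : (X:Polynomial ℤ)^(d+1) ∣ u - 1)
    {t : ℕ} (ht : t ≤ d) : (p*u).coeff t = p.coeff t := by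
  have hu : p*u = p*(u-1) + p := by ring
  rw [hu, Polynomial.coeff_add,
    Polynomial.X_pow_dvd_iff.mp (Dvd.dvd.mul_left h p) t (by omega), zero_add]

lemma coeffB (n j t : ℕ) (hj : j ≤ n+n) (ht : t + eexp j n ≤ n) :
    (g2 (n+n) j * ∏ k ∈ range n, (1 - (X:Polynomial ℤ)^(2*(k+1)))).coeff t
      = if t = 0 then 1 else 0 := by
  apply near_one_coeff (d := t) ?_ le_rfl
  rcases le_or_gt j n with h | h
  · obtain ⟨i, rfl⟩ : ∃ i, n = j + i := ⟨n - j, by omega⟩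
    have he : eexp j (j+i) = i*i := by
      simp only [eexp, show j - (j+i) = 0 from by omega, show j+i-j = i from by omega]
      ring
    rw [he] at ht
    have hii : i ≤ i * i ∨ i = 0 := by
      rcases Nat.eq_zero_or_pos i with h0 | h0
      · right; exact h0
      · left; exact Nat.le_mul_of_pos_left i h0
    rw [Finset.prod_range_add, ← mul_assoc, prodA (j+i+(j+i)) j (by omega)]
    apply near_one_mul
    · apply near_one_prod
      intro k hk
      simp only [mem_range] at hk
      omega
    · apply near_one_prod
      intro k hk
      simp only [mem_range] at hk
      omega
  · obtain ⟨i, hi⟩ : ∃ i, j = n + i := ⟨j - n, by omega⟩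
    have hin : i ≤ n := by omega
    obtain ⟨c, rfl⟩ : ∃ c, n = c + i := ⟨n - i, by omega⟩
    have he : eexp j (c+i) = i*i := by
      simp only [eexp, hi, show c+i+i-(c+i) = i from by omega,
        show c+i - (c+i+i) = 0 from by omega]
      ring
    rw [he] at ht
    have hii : i ≤ i * i ∨ i = 0 := by
      rcases Nat.eq_zero_or_pos i with h0 | h0
      · right; exact h0
      · left; exact Nat.le_mul_of_pos_left i h0
    rw [Finset.prod_range_add, ← mul_assoc, prodA' (c+i+(c+i)) j c (by omega)]
    apply near_one_mul
    · apply near_one_prod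
      intro k hk
      simp only [mem_range] at hk
      omega
    · apply near_one_prod
      intro k hk
      simp only [mem_range] at hk
      omega
lemma DoddSq (n : ℕ) :
    (∏ k ∈ range n, (1 - (X:Polynomial ℤ)^(2*k+1))) *
      (∏ k ∈ range n, (1 - (X:Polynomial ℤ)^(2*k+1)))
      = ∑ j ∈ range (n+n+1), (-1:Polynomial ℤ)^n * ((-1)^j * g2 (n+n) j * X^(eexp j n)) := by
  have hneg : (∏ k ∈ range n, ((X:Polynomial ℤ)^(2*k+1) - 1))
      = (-1)^n * ∏ k ∈ range n, (1 - (X:Polynomial ℤ)^(2*k+1)) := by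
    rw [Finset.prod_congr rfl (fun k (_ : k ∈ range n) =>
      show ((X:Polynomial ℤ)^(2*k+1) - 1) = (-1) * (1 - X^(2*k+1)) from by ring),
      Finset.prod_mul_distrib, Finset.prod_const, Finset.card_range]
  have h := mainR n n
  rw [hneg] at h
  have hsq : ((-1:Polynomial ℤ)^n) * ((-1:Polynomial ℤ)^n) = 1 := by
    rw [← pow_add, show n+n = 2*n from by omega, pow_mul]
    norm_num
  rw [← Finset.mul_sum, ← h]
  linear_combination (-((∏ k ∈ range n, (1 - (X:Polynomial ℤ)^(2*k+1))) *
    (∏ k ∈ range n, (1 - (X:Polynomial ℤ)^(2*k+1))))) * hsq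

lemma coeffT (n : ℕ) :
    ((∏ k ∈ range n, (1 - (X:Polynomial ℤ)^(2*k+1))) *
      (∏ k ∈ range n, (1 - (X:Polynomial ℤ)^(2*k+1))) *
       ∏ k ∈ range n, (1 - (X:Polynomial ℤ)^(2*(k+1)))).coeff n
      = ∑ j ∈ range (n+n+1), (if eexp j n = n then ((-1):ℤ)^(n+j) else 0) := by
  rw [DoddSq, Finset.sum_mul, Polynomial.finset_sum_coeff]
  refine Finset.sum_congr rfl fun j hj => ?_
  simp only [mem_range] at hj
  have h1 : ((-1:Polynomial ℤ)^n * ((-1)^j * g2 (n+n) j * X^(eexp j n)) *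
        (∏ k ∈ range n, (1 - (X:Polynomial ℤ)^(2*(k+1)))))
      = Polynomial.C ((-1:ℤ)^(n+j)) *
        ((g2 (n+n) j * ∏ k ∈ range n, (1 - (X:Polynomial ℤ)^(2*(k+1)))) * X^(eexp j n)) := by
    have hC : (Polynomial.C ((-1:ℤ)^(n+j)) : Polynomial ℤ) = (-1)^(n+j) := by
      simp
    rw [hC, pow_add]
    ring
  rw [h1, Polynomial.coeff_C_mul, Polynomial.coeff_mul_X_pow']
  by_cases he : eexp j n ≤ n
  · rw [if_pos he, coeffB n j (n - eexp j n) (by omega) (by omega)]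
    by_cases h0 : eexp j n = n
    · rw [if_pos (by omega), if_pos h0]
      simp
    · rw [if_neg (by omega), if_neg h0, mul_zero]
  · rw [if_neg he, if_neg (by omega), mul_zero]
lemma sumEval (n : ℕ) :
    (∑ j ∈ range (n+n+1), (if eexp j n = n then ((-1):ℤ)^(n+j) else 0))
      = ∑ r ∈ range (n+1), (if n = r*r then (if r = 0 then (1:ℤ) else 2*(-1)^r) else 0) := by
  rcases Nat.eq_zero_or_pos n with rfl | hn
  · simp [eexp]
  · rw [show n+n+1 = (n+1) + n from by omega, Finset.sum_range_add]
    have h1 : ∑ j ∈ range (n+1), (if eexp j n = n then ((-1):ℤ)^(n+j) else 0)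
        = ∑ r ∈ range (n+1), (if n = r*r then ((-1):ℤ)^r else 0) := by
      rw [← Finset.sum_range_reflect]
      refine Finset.sum_congr rfl fun r hr => ?_
      simp only [mem_range] at hr
      obtain ⟨s, rfl⟩ : ∃ s, n = r + s := ⟨n - r, by omega⟩
      have he : eexp (r+s+1-1-r) (r+s) = r*r := by
        simp only [eexp, show r+s+1-1-r = s from by omega, show s - (r+s) = 0 from by omega,
          show r+s-s = r from by omega]
        ring
      rw [he]
      have hsgn : ((-1):ℤ)^(r+s+(r+s+1-1-r)) = (-1)^r := by
        rw [show r+s+(r+s+1-1-r) = r+2*s from by omega, pow_add, pow_mul]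
        norm_num
      rw [hsgn]
      by_cases hc : r*r = r+s
      · rw [if_pos hc, if_pos hc.symm]
      · rw [if_neg hc, if_neg (fun h => hc h.symm)]
    have h2 : ∑ k ∈ range n, (if eexp (n+1+k) n = n then ((-1):ℤ)^(n+(n+1+k)) else 0)
        = ∑ r ∈ range (n+1), (if n = r*r then ((-1):ℤ)^r else 0) := by
      rw [Finset.sum_range_succ']
      have hz : (if n = 0*0 then ((-1):ℤ)^0 else 0) = 0 := by
        rw [if_neg (by omega)]
      rw [hz, add_zero]
      refine Finset.sum_congr rfl fun k hk => ?_
      have he : eexp (n+1+k) n = (k+1)*(k+1) := by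
        simp only [eexp, show n+1+k-n = k+1 from by omega, show n-(n+1+k) = 0 from by omega]
        ring
      rw [he]
      have hsgn : ((-1):ℤ)^(n+(n+1+k)) = (-1)^(k+1) := by
        rw [show n+(n+1+k) = (k+1)+2*n from by omega, pow_add, pow_mul]
        norm_num
      rw [hsgn]
      by_cases hc : (k+1)*(k+1) = n
      · rw [if_pos hc, if_pos hc.symm]
      · rw [if_neg hc, if_neg (fun h => hc h.symm)]
    rw [h1, h2, ← Finset.sum_add_distrib]
    refine Finset.sum_congr rfl fun r hr => ?_
    by_cases hc : n = r*r
    · rcases Nat.eq_zero_or_pos r with rfl | hrpos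
      · omega
      · rw [if_pos hc, if_pos hc, if_neg (show ¬ r = 0 from by omega)]
        ring
    · rw [if_neg hc, if_neg hc]
      simp
lemma merge (n : ℕ) :
    (∏ k ∈ range n, (1 - (X:Polynomial ℤ)^(2*k+1))) *
      (∏ k ∈ range n, (1 - (X:Polynomial ℤ)^(2*(k+1))))
      = ∏ k ∈ range (n+n), (1 - (X:Polynomial ℤ)^(k+1)) := by
  induction n with
  | zero => simp
  | succ n ih =>
    rw [prod_range_succ, prod_range_succ, show n+1+(n+1) = (n+n)+1+1 from by omega,
      prod_range_succ, prod_range_succ, ← ih]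
    ring

lemma coeffD (n : ℕ) :
    ((∏ k ∈ range n, (1 - (X:Polynomial ℤ)^(k+1))) *
      (∏ k ∈ range n, (1 - (X:Polynomial ℤ)^(2*k+1)))).coeff n
      = ∑ r ∈ range (n+1), (if n = r*r then (if r = 0 then (1:ℤ) else 2*(-1)^r) else 0) := by
  rw [← sumEval, ← coeffT]
  have hm : (∏ k ∈ range n, (1 - (X:Polynomial ℤ)^(2*k+1))) *
      (∏ k ∈ range n, (1 - (X:Polynomial ℤ)^(2*k+1))) *
      (∏ k ∈ range n, (1 - (X:Polynomial ℤ)^(2*(k+1))))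
      = ((∏ k ∈ range n, (1 - (X:Polynomial ℤ)^(k+1))) *
        (∏ k ∈ range n, (1 - (X:Polynomial ℤ)^(2*k+1)))) *
        (∏ k ∈ range n, (1 - (X:Polynomial ℤ)^(n+k+1))) := by
    have h1 := merge n
    have h2 : (∏ k ∈ range (n+n), (1 - (X:Polynomial ℤ)^(k+1)))
        = (∏ k ∈ range n, (1 - (X:Polynomial ℤ)^(k+1))) *
          (∏ k ∈ range n, (1 - (X:Polynomial ℤ)^(n+k+1))) := by
      rw [Finset.prod_range_add]
    calc (∏ k ∈ range n, (1 - (X:Polynomial ℤ)^(2*k+1))) *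
          (∏ k ∈ range n, (1 - (X:Polynomial ℤ)^(2*k+1))) *
          (∏ k ∈ range n, (1 - (X:Polynomial ℤ)^(2*(k+1))))
        = ((∏ k ∈ range n, (1 - (X:Polynomial ℤ)^(2*k+1))) *
            (∏ k ∈ range n, (1 - (X:Polynomial ℤ)^(2*(k+1))))) *
          (∏ k ∈ range n, (1 - (X:Polynomial ℤ)^(2*k+1))) := by ring
      _ = _ := by rw [h1, h2]; ring
  have hW : (X:Polynomial ℤ)^(n+1) ∣ (∏ k ∈ range n, (1 - (X:Polynomial ℤ)^(n+k+1))) - 1 := by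
    apply near_one_prod
    intro i hi
    omega
  rw [hm, coeff_mul_near_one hW le_rfl]

lemma dvd_prod_sub_prod (c : Polynomial ℤ) (s : Finset ℕ) (f g : ℕ → Polynomial ℤ)
    (h : ∀ i ∈ s, c ∣ f i - g i) : c ∣ (∏ i ∈ s, f i) - (∏ i ∈ s, g i) := by
  induction s using Finset.cons_induction with
  | empty => simp
  | cons a s ha ih =>
    rw [Finset.prod_cons, Finset.prod_cons]
    have hkey : f a * ∏ i ∈ s, f i - g a * ∏ i ∈ s, g i
        = f a * ((∏ i ∈ s, f i) - ∏ i ∈ s, g i) + (f a - g a) * ∏ i ∈ s, g i := by ring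
    rw [hkey]
    exact dvd_add (Dvd.dvd.mul_left (ih fun i hi => h i (Finset.mem_cons_of_mem hi)) _)
      (Dvd.dvd.mul_right (h a (Finset.mem_cons_self a s)) _)
lemma coe_prod_ps (s : Finset ℕ) (f : ℕ → Polynomial ℤ) :
    ((∏ i ∈ s, f i : Polynomial ℤ) : PowerSeries ℤ) = ∏ i ∈ s, ((f i : Polynomial ℤ) : PowerSeries ℤ) := by
  induction s using Finset.cons_induction with
  | empty => simp
  | cons a s ha ih => rw [Finset.prod_cons, Finset.prod_cons, Polynomial.coe_mul, ih]

lemma coe_two_ps : ((2 : Polynomial ℤ) : PowerSeries ℤ) = 2 := by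
  rw [← Polynomial.coeToPowerSeries.ringHom_apply]
  exact map_ofNat _ 2

/-- The coefficient of `q^n` in the formal power series `(-2q;q)_∞ (q;q²)_∞`.
Since the factors `(1 + 2q^k)` for `k > n` and `(1 - q^(2k-1))` for `2k-1 > n` do not
affect the coefficient of `q^n`, it equals the coefficient in the truncated product. -/
noncomputable def coeffProd (n : ℕ) : ℤ :=
  PowerSeries.coeff (R := ℤ) n
    ((∏ k ∈ Finset.range n, (1 + 2 * PowerSeries.X ^ (k + 1))) *
      ∏ k ∈ Finset.range n, (1 - PowerSeries.X ^ (2 * k + 1)))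

theorem statement6 (n : ℕ) :
    coeffProd n % 3 =
      (∑ r ∈ Finset.range (n + 1),
        if n = r * r then (if r = 0 then (1 : ℤ) else 2 * (-1) ^ r) else 0) % 3 ∧
    (¬ IsSquare n → coeffProd n % 3 = 0) ∧
    (1 ≤ n → IsSquare n → Odd n → coeffProd n % 3 = 1) ∧
    (1 ≤ n → IsSquare n → Even n → coeffProd n % 3 = 2) := by
  have hc1 : coeffProd n = ((∏ k ∈ range n, (1 + 2 * X^(k+1)) : Polynomial ℤ) *
      (∏ k ∈ range n, (1 - X^(2*k+1)) : Polynomial ℤ)).coeff n := by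
    have hA : (∏ k ∈ Finset.range n, (1 + 2 * PowerSeries.X ^ (k + 1)) : PowerSeries ℤ)
        = ((∏ k ∈ range n, (1 + 2 * X ^ (k+1)) : Polynomial ℤ) : PowerSeries ℤ) := by
      rw [coe_prod_ps]
      refine Finset.prod_congr rfl fun k _ => ?_
      push_cast [coe_two_ps]
      ring
    have hB : (∏ k ∈ Finset.range n, (1 - PowerSeries.X ^ (2 * k + 1)) : PowerSeries ℤ)
        = ((∏ k ∈ range n, (1 - X ^ (2*k+1)) : Polynomial ℤ) : PowerSeries ℤ) := by
      rw [coe_prod_ps]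
      refine Finset.prod_congr rfl fun k _ => ?_
      push_cast
      ring
    unfold coeffProd
    rw [hA, hB, ← Polynomial.coe_mul, Polynomial.coeff_coe]
  have hdvd : (3:ℤ) ∣ (((∏ k ∈ range n, (1 + 2*X^(k+1)) : Polynomial ℤ) *
      ∏ k ∈ range n, (1 - X^(2*k+1))).coeff n)
      - ((∏ k ∈ range n, (1 - (X:Polynomial ℤ)^(k+1))) *
        (∏ k ∈ range n, (1 - X^(2*k+1)))).coeff n := by
    have hpd : (3 : Polynomial ℤ) ∣ ((∏ k ∈ range n, (1 + 2*X^(k+1))) -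
        ∏ k ∈ range n, (1 - (X:Polynomial ℤ)^(k+1))) :=
      dvd_prod_sub_prod 3 _ _ _ (fun i _ => ⟨X^(i+1), by ring⟩)
    obtain ⟨q, hq⟩ := hpd
    have hkey : (∏ k ∈ range n, (1 + 2*X^(k+1)) : Polynomial ℤ) *
        (∏ k ∈ range n, (1 - X^(2*k+1)))
        - (∏ k ∈ range n, (1 - (X:Polynomial ℤ)^(k+1))) * (∏ k ∈ range n, (1 - X^(2*k+1)))
        = 3 * (q * ∏ k ∈ range n, (1 - X^(2*k+1))) := by
      rw [← mul_assoc, ← hq]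
      ring
    rw [← Polynomial.coeff_sub, hkey, Polynomial.coeff_ofNat_mul]
    exact ⟨_, rfl⟩
  have hmod : coeffProd n % 3 =
      (∑ r ∈ Finset.range (n + 1),
        if n = r * r then (if r = 0 then (1 : ℤ) else 2 * (-1) ^ r) else 0) % 3 := by
    rw [hc1, ← coeffD n]
    omega
  refine ⟨hmod, ?_, ?_, ?_⟩
  · intro h
    rw [hmod, Finset.sum_eq_zero fun r _ => if_neg fun hn => h ⟨r, hn⟩]
    norm_num
  · intro h1 hsq hodd
    obtain ⟨r, hr⟩ := hsq
    have hr1 : 1 ≤ r := by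
      rcases Nat.eq_zero_or_pos r with rfl | h
      · simp at hr; omega
      · exact h
    have hrn : r < n + 1 := by
      have := Nat.le_mul_of_pos_left r hr1
      omega
    have hS : (∑ r ∈ Finset.range (n + 1),
        if n = r * r then (if r = 0 then (1 : ℤ) else 2 * (-1) ^ r) else 0) = 2*(-1)^r := by
      rw [Finset.sum_eq_single_of_mem r (mem_range.mpr hrn)]
      · rw [if_pos hr, if_neg (by omega)]
      · intro b _ hbr
        exact if_neg (fun hnb => hbr (Nat.mul_self_inj.mp (hnb.symm.trans hr)))
    have hodd_r : Odd r := by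
      rw [hr, Nat.odd_mul] at hodd
      exact hodd.1
    rw [hmod, hS, Odd.neg_one_pow hodd_r]
    decide
  · intro h1 hsq heven
    obtain ⟨r, hr⟩ := hsq
    have hr1 : 1 ≤ r := by
      rcases Nat.eq_zero_or_pos r with rfl | h
      · simp at hr; omega
      · exact h
    have hrn : r < n + 1 := by
      have := Nat.le_mul_of_pos_left r hr1
      omega
    have hS : (∑ r ∈ Finset.range (n + 1),
        if n = r * r then (if r = 0 then (1 : ℤ) else 2 * (-1) ^ r) else 0) = 2*(-1)^r := by
      rw [Finset.sum_eq_single_of_mem r (mem_range.mpr hrn)]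
      · rw [if_pos hr, if_neg (by omega)]
      · intro b _ hbr
        exact if_neg (fun hnb => hbr (Nat.mul_self_inj.mp (hnb.symm.trans hr)))
    have heven_r : Even r := by
      rw [hr, Nat.even_mul] at heven
      rcases heven with h | h <;> exact h
    rw [hmod, hS, Even.neg_one_pow heven_r]
    decide
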